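/- Let T be the graph of a piecewise linear function f : [a,b] → ℝ and let u and w be points on a horizontal line L above T with x(w) < x(u). If p is a point on T with x(u) < x(p) and p is not visible from u, then p is not visible from w. -/
import Mathlib


open Set

/-- Visibility: the segment from terrain point `p` to guard `u` stays on or above
the terrain, which is the graph of `f` over `[a,b]`. -/
def Vis (a b : ℝ) (f : ℝ → ℝ) (p u : ℝ × ℝ) : Prop :=
  ∀ q ∈ segment ℝ p u, q.1 ∈ Set.Icc a b → f q.1 ≤ q.2

/-- If `p ∈ T` with `x(u) < x(p)` is not visible from `u` on a horizontal line `L`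
strictly above `T`, then `p` is not visible from any `w ∈ L` with `x(w) < x(u)`. -/
theorem stmt1 (a b h : ℝ) (f : ℝ → ℝ)
    (hT : ∀ t ∈ Set.Icc a b, f t < h)
    (u w : ℝ × ℝ) (hu : u.2 = h) (hw : w.2 = h) (hwu : w.1 < u.1)
    (t : ℝ) (ht : t ∈ Set.Icc a b) (htu : u.1 < t)
    (hnv : ¬ Vis a b f (t, f t) u) :
    ¬ Vis a b f (t, f t) w := by
  intro hvw
  apply hnv
  intro q hq hq1
  rcases hq with ⟨c, d, hc, hd, hcd, rfl⟩
  have hfh : f t < h := hT t ht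
  have htw : (0:ℝ) < t - w.1 := by linarith
  have htu' : (0:ℝ) < t - u.1 := by linarith
  set d' : ℝ := d * (t - u.1) / (t - w.1) with hd'
  have hd'0 : 0 ≤ d' := by positivity
  have hd'd : d' ≤ d := by
    rw [hd', div_le_iff₀ htw]
    nlinarith
  have hd'1 : d' ≤ 1 := le_trans hd'd (by linarith)
  have hmem : ((1 - d') • ((t : ℝ), f t) + d' • w) ∈ segment ℝ ((t : ℝ), f t) w :=
    ⟨1 - d', d', by linarith, hd'0, by ring, rfl⟩
  have hx : ((1 - d') • ((t : ℝ), f t) + d' • w).1 = (c • ((t : ℝ), f t) + d • u).1 := by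
    simp only [Prod.fst_add, Prod.smul_fst, smul_eq_mul]
    have h2 : d' * (t - w.1) = d * (t - u.1) := by
      rw [hd']; field_simp
    linear_combination -h2 - t * hcd
  have := hvw _ hmem (by rwa [hx])
  rw [hx] at this
  refine le_trans this ?_
  simp only [Prod.snd_add, Prod.smul_snd, smul_eq_mul, hu, hw]
  have key : d' * (h - f t) ≤ d * (h - f t) :=
    mul_le_mul_of_nonneg_right hd'd (by linarith)
  have hc1 : c = 1 - d := by linarith
  rw [hc1]
  nlinarith [key]
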